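/- Let A₁ be a nonzero Banach space, A₂ a Banach space, Z a set, and Δ : Z → A₂* a norming family: ‖Δ(z)‖ ≤ 1 for all z and ‖g‖ = sup_{z∈Z} |Δ(z)(g)| for all g ∈ A₂. Let T : A₁ → A₂ be a linear isometry. Then every extreme point of the closed unit ball of A₁* belongs to T*(C), where C is the weak-* closure in A₂* of the set {λ • Δ(z) : |λ| = 1, z ∈ Z}. -/

import Mathlib

open NormedSpace

/-- Extreme points of a set `E` in a complex vector space, with the `t ∈ (0,1)` definition. -/
def extremePts {V : Type*} [AddCommGroup V] [Module ℂ V] (E : Set V) : Set V :=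
  {v | v ∈ E ∧ ∀ x ∈ E, ∀ y ∈ E, ∀ t : ℝ, 0 < t → t < 1 →
    (t : ℂ) • x + ((1 - t : ℝ) : ℂ) • y = v → x = v ∧ y = v}

set_option maxHeartbeats 1000000

open Set

section Milman2

section Milman
variable {E : Type*} [AddCommGroup E] [Module ℝ E] [TopologicalSpace E]
  [IsTopologicalAddGroup E] [ContinuousSMul ℝ E]

lemma isCompact_convexJoin {s t : Set E} (hs : IsCompact s) (ht : IsCompact t) :
    IsCompact (convexJoin ℝ s t) := by
  have heq : convexJoin ℝ s t =
      (fun p : ℝ × E × E => p.1 • p.2.1 + (1 - p.1) • p.2.2) '' (Icc (0:ℝ) 1 ×ˢ s ×ˢ t) := by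
    ext x
    rw [mem_convexJoin]
    constructor
    · rintro ⟨a, ha, b, hb, u, v, hu, hv, huv, rfl⟩
      exact ⟨(u, a, b), ⟨⟨hu, by linarith⟩, ha, hb⟩, by simp [show (1:ℝ) - u = v by linarith]⟩
    · rintro ⟨⟨u, a, b⟩, ⟨⟨hu0, hu1⟩, ha, hb⟩, rfl⟩
      exact ⟨a, ha, b, hb, u, 1 - u, hu0, by linarith, by ring, rfl⟩
  rw [heq]
  exact ((isCompact_Icc.prod (hs.prod ht)).image (by fun_prop))

lemma isCompact_convexHull_biUnion {ι : Type*} (t : Finset ι) (D : ι → Set E)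
    (hD : ∀ i ∈ t, IsCompact (D i)) (hconv : ∀ i ∈ t, Convex ℝ (D i)) :
    IsCompact (convexHull ℝ (⋃ i ∈ t, D i)) := by
  classical
  induction t using Finset.induction_on with
  | empty => simp
  | @insert a t ha ih =>
    rw [Finset.set_biUnion_insert]
    have hDa := hD a (Finset.mem_insert_self a t)
    have ihc := ih (fun i hi => hD i (Finset.mem_insert_of_mem hi))
      (fun i hi => hconv i (Finset.mem_insert_of_mem hi))
    rcases (D a).eq_empty_or_nonempty with h1 | h1
    · rw [h1, Set.empty_union]; exact ihc
    rcases (⋃ i ∈ t, D i).eq_empty_or_nonempty with h2 | h2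
    · rw [h2, Set.union_empty, (hconv a (Finset.mem_insert_self a t)).convexHull_eq]
      exact hDa
    · rw [convexHull_union h1 h2]
      exact isCompact_convexJoin
        (by rw [(hconv a (Finset.mem_insert_self a t)).convexHull_eq]; exact hDa) ihc

end Milman

section ExtremeAlg
variable {E : Type*} [AddCommGroup E] [Module ℝ E]

lemma extremePoint_mem_biUnion {s : Set E} (hs : Convex ℝ s) {ι : Type*} (t : Finset ι)
    (D : ι → Set E) (hconv : ∀ i ∈ t, Convex ℝ (D i)) (hsub : ∀ i ∈ t, D i ⊆ s)
    {x : E} (hx : x ∈ s.extremePoints ℝ)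
    (hmem : x ∈ convexHull ℝ (⋃ i ∈ t, D i)) : ∃ i ∈ t, x ∈ D i := by
  classical
  induction t using Finset.induction_on with
  | empty => simp at hmem
  | @insert a t ha ih =>
    rw [Finset.set_biUnion_insert] at hmem
    have hconva := hconv a (Finset.mem_insert_self a t)
    have ih' := ih (fun i hi => hconv i (Finset.mem_insert_of_mem hi))
      (fun i hi => hsub i (Finset.mem_insert_of_mem hi))
    rcases (D a).eq_empty_or_nonempty with h1 | h1
    · rw [h1, Set.empty_union] at hmem
      obtain ⟨i, hi, hxi⟩ := ih' hmem
      exact ⟨i, Finset.mem_insert_of_mem hi, hxi⟩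
    rcases (⋃ i ∈ t, D i).eq_empty_or_nonempty with h2 | h2
    · rw [h2, Set.union_empty, hconva.convexHull_eq] at hmem
      exact ⟨a, Finset.mem_insert_self a t, hmem⟩
    rw [convexHull_union h1 h2, hconva.convexHull_eq, mem_convexJoin] at hmem
    obtain ⟨p, hp, q, hq, u, v, hu, hv, huv, hx'⟩ := hmem
    have hqs : q ∈ s := convexHull_min (Set.iUnion₂_subset
      (fun i hi => hsub i (Finset.mem_insert_of_mem hi))) hs hq
    rcases hu.eq_or_lt with hu0 | hu0
    · have hxq : x = q := by rw [← hx', ← hu0, show v = 1 by linarith]; simp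
      obtain ⟨i, hi, hxi⟩ := ih' (hxq ▸ hq)
      exact ⟨i, Finset.mem_insert_of_mem hi, hxi⟩
    rcases hv.eq_or_lt with hv0 | hv0
    · have hxp : x = p := by rw [← hx', ← hv0, show u = 1 by linarith]; simp
      exact ⟨a, Finset.mem_insert_self a t, hxp ▸ hp⟩
    · have := hx.2 (hsub a (Finset.mem_insert_self a t) hp) hqs
        ⟨u, v, hu0, hv0, huv, hx'⟩
      exact ⟨a, Finset.mem_insert_self a t, this ▸ hp⟩
end ExtremeAlg

section MilmanMain
variable {E : Type*} [AddCommGroup E] [Module ℝ E] [TopologicalSpace E]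
  [IsTopologicalAddGroup E] [ContinuousSMul ℝ E] [T2Space E] [LocallyConvexSpace ℝ E]

/-- **Milman's theorem**: extreme points of the closed convex hull of a compact set `K`
lie in `K` (provided the closed convex hull is itself compact). -/
lemma milman {K : Set E} (hK : IsCompact K)
    (hs : IsCompact (closure (convexHull ℝ K))) {x : E}
    (hx : x ∈ (closure (convexHull ℝ K)).extremePoints ℝ) : x ∈ K := by
  classical
  by_contra hxK
  -- find a convex neighborhood V of 0 with (closure V) avoiding x - K
  have hN : {v : E | x - v ∉ K} ∈ nhds (0 : E) := by
    have : IsOpen {v : E | x - v ∉ K} :=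
      (hK.isClosed.preimage (by fun_prop : Continuous fun v : E => x - v)).isOpen_compl
    exact this.mem_nhds (by simpa using hxK)
  obtain ⟨M, hM_mem, hM_closed, hMN⟩ := exists_mem_nhds_isClosed_subset hN
  obtain ⟨V, ⟨hV_mem, hV_conv⟩, hVM⟩ :=
    (LocallyConvexSpace.convex_basis (𝕜 := ℝ) (0 : E)).mem_iff.mp hM_mem
  have hclV : closure V ⊆ {v : E | x - v ∉ K} :=
    fun v hv => hMN (hM_closed.closure_subset_iff.mpr hVM hv)
  -- cover K by finitely many translates k + V
  obtain ⟨t, htK, hcover⟩ := hK.elim_nhds_subcover (fun k => (k + ·) '' V) (fun k _ => by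
    have h0 := Filter.image_mem_map (m := ⇑(Homeomorph.addLeft k)) hV_mem
    rw [(Homeomorph.addLeft k).map_nhds_eq 0] at h0
    simpa using h0)
  -- the pieces
  set D : E → Set E := fun k => closure (convexHull ℝ (K ∩ ((k + ·) '' V))) with hD
  have hD_conv : ∀ k ∈ t, Convex ℝ (D k) := fun k _ => (convex_convexHull ℝ _).closure
  have hD_sub : ∀ k ∈ t, D k ⊆ closure (convexHull ℝ K) := fun k _ =>
    closure_mono (convexHull_mono inter_subset_left)
  have hD_comp : ∀ k ∈ t, IsCompact (D k) := fun k hk =>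
    hs.of_isClosed_subset isClosed_closure (hD_sub k hk)
  have hKsub : K ⊆ ⋃ k ∈ t, D k := by
    intro y hy
    obtain ⟨k, hk, hyk⟩ := Set.mem_iUnion₂.mp (hcover hy)
    exact Set.mem_iUnion₂.mpr ⟨k, hk, subset_closure (subset_convexHull ℝ _ ⟨hy, hyk⟩)⟩
  have hJ_comp : IsCompact (convexHull ℝ (⋃ k ∈ t, D k)) :=
    isCompact_convexHull_biUnion t D hD_comp hD_conv
  have hxJ : x ∈ convexHull ℝ (⋃ k ∈ t, D k) := by
    have : closure (convexHull ℝ K) ⊆ convexHull ℝ (⋃ k ∈ t, D k) :=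
      closure_minimal (convexHull_mono hKsub) hJ_comp.isClosed
    exact this hx.1
  obtain ⟨k, hkt, hxk⟩ := extremePoint_mem_biUnion ((convex_convexHull ℝ K).closure) t D
    hD_conv hD_sub hx hxJ
  -- x ∈ D k ⊆ closure (k + V) = k + closure V
  have h1 : D k ⊆ closure ((k + ·) '' V) :=
    closure_mono (convexHull_min inter_subset_right (hV_conv.translate k))
  have h2 : closure ((k + ·) '' V) = (k + ·) '' closure V := by
    simpa using ((Homeomorph.addLeft k).image_closure V).symm
  obtain ⟨v, hv, hkv⟩ := h2 ▸ h1 hxk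
  exact hclV hv (by rw [← hkv]; simpa using htK k hkt)
end MilmanMain

section Repr2

section Repr
variable {A : Type*} [NormedAddCommGroup A] [NormedSpace ℂ A]

lemma weakDual_real_functional_repr (l : WeakDual ℂ A →L[ℝ] ℝ) :
    ∃ f : A, ∀ m : WeakDual ℂ A, l m = (m f).re := by
  classical
  -- continuity at 0 via the seminorm basis
  have h1 : l ⁻¹' Set.Ioo (-1 : ℝ) 1 ∈ nhds (0 : WeakDual ℂ A) := by
    refine l.continuous.continuousAt.preimage_mem_nhds ?_
    rw [map_zero]
    exact Ioo_mem_nhds (by norm_num) (by norm_num)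
  replace h1 := (LinearMap.hasBasis_weakBilin (topDualPairing ℂ A)).mem_iff.mp h1
  obtain ⟨U, hU, hUsub⟩ := h1
  obtain ⟨s, r, hr, rfl⟩ := (SeminormFamily.basisSets_iff _).mp hU
  -- vanishing on common kernel
  have hker : ∀ m : WeakDual ℂ A, (∀ y ∈ s, m y = 0) → l m = 0 := by
    intro m hm
    by_contra h0
    have key : ∀ c : ℝ, |c * l m| < 1 := by
      intro c
      have hmem : (c • m : WeakDual ℂ A) ∈
          Seminorm.ball (s.sup (LinearMap.toSeminormFamily (topDualPairing ℂ A))) 0 r := by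
        refine (Seminorm.mem_ball_zero _).mpr ?_
        refine Seminorm.finset_sup_apply_lt hr (fun y hy => ?_)
        have h5 : (c • m : WeakDual ℂ A) y = 0 := by
          rw [show (c • m : WeakDual ℂ A) y = c • (m y) from rfl, hm y hy, smul_zero]
        show ‖(c • m : WeakDual ℂ A) y‖ < r
        rw [h5]
        simpa using hr
      have : c • m ∈ l ⁻¹' Set.Ioo (-1 : ℝ) 1 := hUsub hmem
      simp only [Set.mem_preimage, Set.mem_Ioo, map_smul, smul_eq_mul] at this
      rw [abs_lt]; exact this
    have := key (2 / l m)
    rw [div_mul_cancel₀ 2 h0] at this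
    norm_num at this
  -- factor through the evaluation map π
  let π : WeakDual ℂ A →ₗ[ℝ] (s → ℂ) :=
    { toFun := fun m y => m y.1
      map_add' := fun m m' => rfl
      map_smul' := fun c m => rfl }
  have hle : LinearMap.ker π ≤ LinearMap.ker (l.toLinearMap) := by
    intro m hm
    rw [LinearMap.mem_ker] at hm ⊢
    exact hker m (fun y hy => congrFun hm ⟨y, hy⟩)
  -- l factors through range π
  let lbar := (LinearMap.ker π).liftQ l.toLinearMap hle
  let q := π.quotKerEquivRange
  obtain ⟨g, hg⟩ := LinearMap.exists_extend (lbar.comp q.symm.toLinearMap)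
  have hgπ : ∀ m : WeakDual ℂ A, g (π m) = l m := by
    intro m
    have h2 : ((LinearMap.range π).subtype) ⟨π m, LinearMap.mem_range_self π m⟩ = π m := rfl
    have h3 : q ((LinearMap.ker π).mkQ m) = ⟨π m, LinearMap.mem_range_self π m⟩ := by
      apply Subtype.ext
      simp [q, LinearMap.quotKerEquivRange]
    calc g (π m) = (g.comp ((LinearMap.range π).subtype)) ⟨π m, _⟩ := rfl
      _ = lbar (q.symm ⟨π m, LinearMap.mem_range_self π m⟩) := by rw [hg]; rfl
      _ = lbar ((LinearMap.ker π).mkQ m) := by rw [← h3, LinearEquiv.symm_apply_apply]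
      _ = l m := by simp [lbar]
  -- decompose g into coordinates
  set c : s → ℂ := fun y => ⟨g (Pi.single y (1:ℂ) : s → ℂ), -g (Pi.single y Complex.I : s → ℂ)⟩ with hc
  have hsingle : ∀ (y : s) (z : ℂ), g (Pi.single y z) = (c y * z).re := by
    intro y z
    have hz : (Pi.single y z : s → ℂ) = z.re • (Pi.single y (1:ℂ) : s → ℂ) + z.im • (Pi.single y Complex.I : s → ℂ) := by
      rw [← Pi.single_smul, ← Pi.single_smul, ← Pi.single_add]
      simp [Complex.real_smul, Complex.ext_iff]
    rw [hz, map_add, map_smul, map_smul]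
    simp [hc, Complex.ext_iff, Complex.mul_re]
    try ring
  refine ⟨∑ y : s, c y • (y : A), fun m => ?_⟩
  have hv : (π m : s → ℂ) = ∑ y : s, Pi.single y (π m y) := by
    exact (Finset.univ_sum_single (π m)).symm
  have : l m = g (π m) := (hgπ m).symm
  rw [this, hv, map_sum]
  have : ∀ y : s, g (Pi.single y (π m y)) = (c y * m y.1).re := fun y => hsingle y _
  rw [Finset.sum_congr rfl (fun y _ => this y)]
  rw [← Complex.re_sum]
  congr 1
  rw [map_sum]
  exact Finset.sum_congr rfl (fun y _ => by rw [map_smul]; rfl)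
end Repr

instance (priority := 1100) weakDualLocallyConvex {A : Type*} [NormedAddCommGroup A]
    [NormedSpace ℂ A] : LocallyConvexSpace ℝ (WeakDual ℂ A) :=
  WeakBilin.locallyConvexSpace

instance weakDualContinuousSMulReal {A : Type*} [NormedAddCommGroup A]
    [NormedSpace ℂ A] : @ContinuousSMul ℝ (WeakDual ℂ A)
      (@Module.toDistribMulAction ℝ (WeakDual ℂ A) _ _ (Module.complexToReal (WeakDual ℂ A))).toDistribSMul.toSMul _ _ :=
  WeakDual.instContinuousSMul ℝ

instance weakDualLocallyConvexReal {A : Type*} [NormedAddCommGroup A]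
    [NormedSpace ℂ A] : @LocallyConvexSpace ℝ (WeakDual ℂ A) _ _ _ (Module.complexToReal (WeakDual ℂ A)) _ :=
  weakDualLocallyConvex

section Main2
theorem extreme_point_mem_adjoint_image_of_weakStar_closure
    {A₁ A₂ : Type*} [NormedAddCommGroup A₁] [NormedSpace ℂ A₁] [CompleteSpace A₁] [Nontrivial A₁]
    [NormedAddCommGroup A₂] [NormedSpace ℂ A₂] [CompleteSpace A₂]
    {Z : Type*} (Δ : Z → (A₂ →L[ℂ] ℂ))
    (hΔ1 : ∀ z : Z, ‖Δ z‖ ≤ 1)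
    (hΔ2 : ∀ g : A₂, ‖g‖ = ⨆ z : Z, ‖Δ z g‖)
    (T : A₁ →L[ℂ] A₂) (hT : ∀ f : A₁, ‖T f‖ = ‖f‖)
    (ℓ : A₁ →L[ℂ] ℂ) (hℓ : ℓ ∈ extremePts (Metric.closedBall (0 : A₁ →L[ℂ] ℂ) 1)) :
    ∃ m ∈ closure {m : WeakDual ℂ A₂ | ∃ lam : ℂ, ‖lam‖ = 1 ∧ ∃ z : Z,
        m = StrongDual.toWeakDual (lam • Δ z)},
      ((StrongDual.toWeakDual.symm m : A₂ →L[ℂ] ℂ)).comp T = ℓ := by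
  classical
  -- Z is nonempty
  have hZ : Nonempty Z := by
    by_contra hZ
    rw [not_nonempty_iff] at hZ
    obtain ⟨f₀, hf₀⟩ := exists_ne (0 : A₁)
    have h1 : ‖T f₀‖ = 0 := by rw [hΔ2]; exact Real.iSup_of_isEmpty _
    rw [hT f₀, norm_eq_zero] at h1
    exact hf₀ h1
  have hTnorm : ‖T‖ ≤ 1 := T.opNorm_le_bound zero_le_one (fun f => by rw [hT]; simp)
  set S : Set (WeakDual ℂ A₂) := {m : WeakDual ℂ A₂ | ∃ lam : ℂ, ‖lam‖ = 1 ∧ ∃ z : Z,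
      m = StrongDual.toWeakDual (lam • Δ z)} with hS
  set C : Set (WeakDual ℂ A₂) := closure S with hCdef
  -- C is compact
  have hSB : S ⊆ WeakDual.toStrongDual ⁻¹' Metric.closedBall 0 1 := by
    rintro m ⟨lam, hlam, z, rfl⟩
    simp only [Set.mem_preimage, Metric.mem_closedBall, dist_zero_right]
    calc ‖WeakDual.toStrongDual (StrongDual.toWeakDual (lam • Δ z))‖ = ‖lam • Δ z‖ := rfl
      _ = ‖lam‖ * ‖Δ z‖ := by
          have : (lam • Δ z : A₂ →L[ℂ] ℂ) = (lam • Δ z : A₂ →L[ℂ] ℂ) := rfl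
          exact norm_smul lam (Δ z)
      _ ≤ 1 := by rw [hlam, one_mul]; exact hΔ1 z
  have hCB : C ⊆ WeakDual.toStrongDual ⁻¹' Metric.closedBall 0 1 :=
    closure_minimal hSB (WeakDual.isClosed_closedBall 0 1)
  have hC_comp : IsCompact C :=
    (WeakDual.isCompact_closedBall (0 : StrongDual ℂ A₂) 1).of_isClosed_subset isClosed_closure hCB
  -- the adjoint map
  set Ta : WeakDual ℂ A₂ → WeakDual ℂ A₁ :=
    fun m => StrongDual.toWeakDual ((WeakDual.toStrongDual m).comp T) with hTa
  have hTa_cont : Continuous Ta :=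
    WeakDual.continuous_of_continuous_eval (fun f => WeakDual.eval_continuous (T f))
  set K : Set (WeakDual ℂ A₁) := Ta '' C with hK
  have hK_comp : IsCompact K := hC_comp.image hTa_cont
  -- K sits inside the unit ball B
  set B : Set (WeakDual ℂ A₁) := WeakDual.toStrongDual ⁻¹' Metric.closedBall 0 1 with hB
  have hKB : K ⊆ B := by
    rintro - ⟨m, hm, rfl⟩
    have hm1 : ‖WeakDual.toStrongDual m‖ ≤ 1 := by
      have := hCB hm; simpa using this
    simp only [hB, Set.mem_preimage, Metric.mem_closedBall, dist_zero_right]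
    calc ‖WeakDual.toStrongDual (Ta m)‖ = ‖(WeakDual.toStrongDual m).comp T‖ := rfl
      _ ≤ ‖WeakDual.toStrongDual m‖ * ‖T‖ := ContinuousLinearMap.opNorm_comp_le _ _
      _ ≤ 1 * 1 := mul_le_mul hm1 hTnorm (norm_nonneg _) zero_le_one
      _ = 1 := one_mul 1
  have hB_conv : Convex ℝ B := by
    intro x hx y hy a b ha hb hab
    simp only [hB, Set.mem_preimage, Metric.mem_closedBall, dist_zero_right] at hx hy ⊢
    calc ‖WeakDual.toStrongDual (a • x + b • y)‖
        = ‖a • WeakDual.toStrongDual x + b • WeakDual.toStrongDual y‖ := rfl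
      _ ≤ a * ‖WeakDual.toStrongDual x‖ + b * ‖WeakDual.toStrongDual y‖ := by
          refine (norm_add_le _ _).trans ?_
          rw [norm_smul, norm_smul, Real.norm_eq_abs, Real.norm_eq_abs, abs_of_nonneg ha,
            abs_of_nonneg hb]
      _ ≤ a * 1 + b * 1 := by gcongr
      _ = 1 := by rw [mul_one, mul_one, hab]
  have hB_closed : IsClosed B := WeakDual.isClosed_closedBall 0 1
  set s : Set (WeakDual ℂ A₁) := closure (convexHull ℝ K) with hs
  have hsB : s ⊆ B := closure_minimal (convexHull_min hKB hB_conv) hB_closed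
  have hs_comp : IsCompact s :=
    (WeakDual.isCompact_closedBall (0 : StrongDual ℂ A₁) 1).of_isClosed_subset isClosed_closure hsB
  -- ‖ℓ‖ ≤ 1
  have hℓ1 : ‖ℓ‖ ≤ 1 := by
    have := hℓ.1; rwa [Metric.mem_closedBall, dist_zero_right] at this
  -- real scalar cast lemma
  have hcast : ∀ (a : ℝ) (x : A₁ →L[ℂ] ℂ), (a : ℂ) • x = a • x := by
    intro a x; ext g
    show (a : ℂ) • (x g) = a • (x g)
    rw [Complex.real_smul, smul_eq_mul]
  -- step 1 : toWeakDual ℓ ∈ s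
  have hmem : StrongDual.toWeakDual ℓ ∈ s := by
    by_contra hcon
    obtain ⟨l, u, hlu, hul⟩ := geometric_hahn_banach_closed_point
      ((convex_convexHull ℝ K).closure) isClosed_closure hcon
    obtain ⟨f, hf⟩ := weakDual_real_functional_repr l
    -- each ‖Δ z (T f)‖ < u
    have hz_lt : ∀ z : Z, ‖Δ z (T f)‖ < u := by
      intro z
      set w : ℂ := Δ z (T f) with hw
      set lam : ℂ := if w = 0 then 1 else (starRingEnd ℂ) w / ‖w‖ with hlam
      have hlam1 : ‖lam‖ = 1 := by
        rw [hlam]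
        split_ifs with h
        · simp
        · rw [norm_div, RCLike.norm_conj, Complex.norm_real, norm_norm]
          exact div_self (norm_ne_zero_iff.mpr h)
      have hlw : lam * w = (‖w‖ : ℂ) := by
        rw [hlam]
        split_ifs with h
        · simp [h]
        · have habs : (‖w‖ : ℂ) ≠ 0 := by
            exact_mod_cast norm_ne_zero_iff.mpr h
          rw [div_mul_eq_mul_div, div_eq_iff habs, mul_comm ((starRingEnd ℂ) w) w,
            Complex.mul_conj, Complex.normSq_eq_norm_sq]
          push_cast
          ring
      have hmemS : Ta (StrongDual.toWeakDual (lam • Δ z)) ∈ s :=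
        subset_closure (subset_convexHull ℝ K
          ⟨StrongDual.toWeakDual (lam • Δ z), subset_closure ⟨lam, hlam1, z, rfl⟩, rfl⟩)
      have := hlu _ hmemS
      rw [show ∀ m, l m = (m f).re from hf] at this
      have heval : (Ta (StrongDual.toWeakDual (lam • Δ z)) : WeakDual ℂ A₁) f = lam * w := rfl
      rw [heval, hlw] at this
      simpa using this
    -- hence ‖f‖ ≤ u
    have hu_pos : (0:ℝ) ≤ u := le_of_lt ((norm_nonneg _).trans_lt (hz_lt (Classical.arbitrary Z)))
    have hfu : ‖f‖ ≤ u := by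
      rw [← hT, hΔ2]
      exact Real.iSup_le (fun z => (hz_lt z).le) hu_pos
    -- but u < Re (ℓ f) ≤ ‖f‖
    have h2 : u < (ℓ f).re := by
      have := hul
      rw [show ∀ m, l m = (m f).re from hf] at this
      exact this
    have h3 : (ℓ f).re ≤ ‖f‖ := by
      calc (ℓ f).re ≤ ‖ℓ f‖ := Complex.re_le_norm _
        _ ≤ ‖ℓ‖ * ‖f‖ := ℓ.le_opNorm f
        _ ≤ 1 * ‖f‖ := by gcongr
        _ = ‖f‖ := one_mul _
    linarith
  -- step 2 : toWeakDual ℓ is an extreme point of s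
  have hxe : StrongDual.toWeakDual ℓ ∈ s.extremePoints ℝ := by
    refine ⟨hmem, ?_⟩
    intro x hx y hy hseg
    obtain ⟨a, b, ha, hb, hab, habeq⟩ := hseg
    have hxB : WeakDual.toStrongDual x ∈ Metric.closedBall (0 : A₁ →L[ℂ] ℂ) 1 := hsB hx
    have hyB : WeakDual.toStrongDual y ∈ Metric.closedBall (0 : A₁ →L[ℂ] ℂ) 1 := hsB hy
    have heq : (a : ℂ) • (WeakDual.toStrongDual x) + ((1 - a : ℝ) : ℂ) • (WeakDual.toStrongDual y)
        = ℓ := by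
      rw [hcast, hcast, show (1 - a : ℝ) = b by linarith]
      exact habeq
    have := hℓ.2 (WeakDual.toStrongDual x) hxB (WeakDual.toStrongDual y) hyB a ha
      (by linarith) heq
    exact congrArg StrongDual.toWeakDual this.1
  -- step 3 : Milman
  have hxK : StrongDual.toWeakDual ℓ ∈ K := milman hK_comp hs_comp hxe
  obtain ⟨m, hmC, hmeq⟩ := hxK
  refine ⟨m, hmC, ?_⟩
  have : StrongDual.toWeakDual.symm (Ta m) = StrongDual.toWeakDual.symm (StrongDual.toWeakDual ℓ) :=
    congrArg _ hmeq
  rw [LinearEquiv.symm_apply_apply] at this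
  exact this
end Main2
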